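/- Let σ₁, σ₂ > 0, U > 0 and 0 < K < U, and let 𝐊 = U + (U − K)·σ₂/σ₁. Then for every τ > 0, the following strict inequalities hold: (K/U)·C^σ(U, 𝐊, τ) < P^σ(U, K, τ) < C^σ(U, 𝐊, τ). In words, in a PCLVG model with the spot at the barrier, the out-of-the-money put price is uniformly bounded above and below, at all maturities, by the prices of static portfolios each consisting of a single out-of-the-money call with strike 𝐊. -/

import Mathlib

open MeasureTheory Filter Set

/-- Standard normal cumulative distribution function. -/
noncomputable def stdNormalCDF (x : ℝ) : ℝ :=
  (Real.sqrt (2 * Real.pi))⁻¹ * ∫ y in Set.Iic x, Real.exp (-(y ^ 2) / 2)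

/-- Black–Scholes call price with zero interest and dividend rates. -/
noncomputable def bsCall (S K τ σ : ℝ) : ℝ :=
  let d1 := (Real.log (S / K) + σ ^ 2 * τ / 2) / (σ * Real.sqrt τ)
  S * stdNormalCDF d1 - K * stdNormalCDF (d1 - σ * Real.sqrt τ)

/-- Black–Scholes put price with zero interest and dividend rates. -/
noncomputable def bsPut (S K τ σ : ℝ) : ℝ := bsCall S K τ σ - S + K

/-- The denominator appearing in the PCLVG call price formula. -/
noncomputable def pclvgD (σ1 σ2 U τ : ℝ) : ℝ :=
  1 / σ1 + 1 / σ2 - (1 / σ2 - 1 / σ1) * Real.exp (-2 * U / (σ1 * τ))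

/-- The explicit PCLVG call price `C^σ(U,K,τ)`. -/
noncomputable def pclvgCall (σ1 σ2 U K τ : ℝ) : ℝ :=
  if K < U then
    (U - K) +
      τ * Real.exp (-(U - K) / (σ1 * τ)) * (1 - Real.exp (-2 * K / (σ1 * τ))) /
        pclvgD σ1 σ2 U τ
  else
    τ * Real.exp (-(K - U) / (σ2 * τ)) * (1 - Real.exp (-2 * U / (σ1 * τ))) /
      pclvgD σ1 σ2 U τ

/-- The PCLVG put price `P^σ(U,K,τ) = C^σ(U,K,τ) − (U − K)`. -/
noncomputable def pclvgPut (σ1 σ2 U K τ : ℝ) : ℝ := pclvgCall σ1 σ2 U K τ - (U - K)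

lemma aux_key {a K U : ℝ} (ha : 0 < a) (hK : 0 < K) (hKU : K < U) :
    K * (1 - Real.exp (-(a * U))) < U * (1 - Real.exp (-(a * K))) := by
  have hU : 0 < U := hK.trans hKU
  set f : ℝ → ℝ := fun x => U * (1 - Real.exp (-(x * K))) - K * (1 - Real.exp (-(x * U)))
    with hf
  have hderiv : ∀ x : ℝ, HasDerivAt f
      (U * (K * Real.exp (-(x * K))) - K * (U * Real.exp (-(x * U)))) x := by
    intro x
    have h1 : HasDerivAt (fun x : ℝ => Real.exp (-(x * K))) (Real.exp (-(x * K)) * (-K)) x := by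
      have : HasDerivAt (fun x : ℝ => -(x * K)) (-K) x := by
        simpa [Pi.neg_def] using ((hasDerivAt_id x).mul_const K).neg
      exact (Real.hasDerivAt_exp _).comp x this
    have h2 : HasDerivAt (fun x : ℝ => Real.exp (-(x * U))) (Real.exp (-(x * U)) * (-U)) x := by
      have : HasDerivAt (fun x : ℝ => -(x * U)) (-U) x := by
        simpa [Pi.neg_def] using ((hasDerivAt_id x).mul_const U).neg
      exact (Real.hasDerivAt_exp _).comp x this
    have := (((hasDerivAt_const x (1:ℝ)).sub h1).const_mul U).sub
      (((hasDerivAt_const x (1:ℝ)).sub h2).const_mul K)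
    exact this.congr_deriv (by ring)
  have hmono : StrictMonoOn f (Set.Ici 0) := by
    apply strictMonoOn_of_deriv_pos (convex_Ici 0)
    · exact (Continuous.continuousOn (by fun_prop))
    · intro x hx
      rw [interior_Ici] at hx
      rw [(hderiv x).deriv]
      have hxp : 0 < x := hx
      have hE : Real.exp (-(x * U)) < Real.exp (-(x * K)) := by
        apply Real.exp_lt_exp.mpr
        nlinarith
      nlinarith [mul_pos (mul_pos hU hK) (sub_pos.mpr hE)]
  have h0 : f 0 = 0 := by simp [hf]
  have := hmono (Set.self_mem_Ici) (Set.mem_Ici.mpr ha.le) ha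
  rw [h0] at this
  simp only [hf] at this
  linarith

/-- In a PCLVG model with the spot at the barrier, the OTM put price is
strictly bounded between the prices of the two single-call static portfolios with strike
`𝐊 = U + (U−K)σ₂/σ₁`, for all maturities. -/
theorem pclvg_put_call_bounds (σ1 σ2 U K : ℝ)
    (h1 : 0 < σ1) (h2 : 0 < σ2) (hU : 0 < U) (hK : 0 < K) (hKU : K < U) :
    ∀ τ : ℝ, 0 < τ →
      K / U * pclvgCall σ1 σ2 U (U + (U - K) * σ2 / σ1) τ < pclvgPut σ1 σ2 U K τ ∧
      pclvgPut σ1 σ2 U K τ < pclvgCall σ1 σ2 U (U + (U - K) * σ2 / σ1) τ := by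
  intro τ hτ
  have hs : 0 < σ1 * τ := mul_pos h1 hτ
  -- positivity of D
  have hE01 : Real.exp (-2 * U / (σ1 * τ)) < 1 := by
    apply Real.exp_lt_one_iff.mpr
    have h0 : 0 < 2 * U / (σ1 * τ) := by positivity
    linarith [show -2 * U / (σ1 * τ) = -(2 * U / (σ1 * τ)) from by ring]
  have hE00 : 0 < Real.exp (-2 * U / (σ1 * τ)) := Real.exp_pos _
  have hD : 0 < pclvgD σ1 σ2 U τ := by
    unfold pclvgD
    have hi1 : 0 < 1 / σ1 := by positivity
    have hi2 : 0 < 1 / σ2 := by positivity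
    nlinarith [mul_pos hi2 (sub_pos.mpr hE01), mul_pos hi1 hE00]
  -- the big strike is ≥ U
  have hKb : ¬ (U + (U - K) * σ2 / σ1 < U) := by
    have : 0 < (U - K) * σ2 / σ1 := by
      apply div_pos (mul_pos (by linarith) h2) h1
    linarith
  -- exponent identity
  have hexp : Real.exp (-(U + (U - K) * σ2 / σ1 - U) / (σ2 * τ))
      = Real.exp (-(U - K) / (σ1 * τ)) := by
    congr 1
    field_simp
    ring
  -- key strict inequality from concavity
  have ha : 0 < 2 / (σ1 * τ) := by positivity
  have key := aux_key ha hK hKU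
  have eU : -(2 / (σ1 * τ) * U) = -2 * U / (σ1 * τ) := by ring
  have eK : -(2 / (σ1 * τ) * K) = -2 * K / (σ1 * τ) := by ring
  rw [eU, eK] at key
  -- abbreviations
  set D := pclvgD σ1 σ2 U τ with hDdef
  set e := Real.exp (-(U - K) / (σ1 * τ)) with hedef
  set EU := Real.exp (-2 * U / (σ1 * τ)) with hEUdef
  set EK := Real.exp (-2 * K / (σ1 * τ)) with hEKdef
  have hc : 0 < τ * e / D := by positivity
  have hEUK : EU < EK := by
    apply Real.exp_lt_exp.mpr
    rw [div_lt_div_iff₀ hs hs]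
    nlinarith
  unfold pclvgPut pclvgCall
  rw [if_neg hKb, if_pos hKU, hexp]
  constructor
  · rw [div_mul_eq_mul_div, div_lt_iff₀ hU]
    have h := mul_lt_mul_of_pos_left key hc
    have e1 : K * (τ * e * (1 - EU) / D) = τ * e / D * (K * (1 - EU)) := by ring
    have e2 : (U - K + τ * e * (1 - EK) / D - (U - K)) * U
        = τ * e / D * (U * (1 - EK)) := by ring
    rw [e1, e2]
    exact h
  · have h := mul_lt_mul_of_pos_left (sub_lt_sub_left hEUK 1) hc
    have e1 : U - K + τ * e * (1 - EK) / D - (U - K) = τ * e / D * (1 - EK) := by ring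
    have e2 : τ * e * (1 - EU) / D = τ * e / D * (1 - EU) := by ring
    rw [e1, e2]
    exact h
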